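/- Let m ≥ 2 and suppose [1],[2],...,[2m²+m] is a cyclic ordering of the edges of K_{2m+1} in which every m cyclically consecutive edges are pairwise disjoint. For each index i, let M_{[i]} denote the set of the m edges [i],[i+1],...,[i+m-1] (indices modulo 2m²+m). Then each M_{[i]} is a near-perfect matching of K_{2m+1} leaving exactly one vertex uncovered, and the edge [i+m] joins the unique vertex not covered by M_{[i]} to one of the two vertices of the edge [i]. -/

import Mathlib

/-- Two edges of a graph (as unordered pairs of vertices) are *disjoint*
if they share no vertex. -/
def edgesDisjoint {V : Type*} (e₁ e₂ : Sym2 V) : Prop :=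
  ∀ v : V, v ∈ e₁ → v ∉ e₂

/-- The number of edges of a graph `G`. -/
noncomputable def edgeCount {V : Type*} (G : SimpleGraph V) : ℕ :=
  Nat.card G.edgeSet

/-- A linear ordering `f` of the edges of `G` has matching number at least `d`
if every `d` consecutive edges in the ordering are pairwise disjoint. -/
def LinearGood {V : Type*} (G : SimpleGraph V)
    (f : Fin (edgeCount G) ≃ G.edgeSet) (d : ℕ) : Prop :=
  ∀ j k : Fin (edgeCount G), j ≠ k → (j : ℕ) < (k : ℕ) + d → (k : ℕ) < (j : ℕ) + d →
    edgesDisjoint (f j : Sym2 V) (f k : Sym2 V)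

/-- The matching sequencibility `ms G`: the largest `d` (necessarily at most the
number of edges) for which some linear ordering of the edges of `G` has every
`d` consecutive edges forming a matching. -/
noncomputable def ms {V : Type*} (G : SimpleGraph V) : ℕ :=
  sSup {d : ℕ | d ≤ edgeCount G ∧ ∃ f : Fin (edgeCount G) ≃ G.edgeSet, LinearGood G f d}

/-- A cyclic ordering `f : ZMod N ≃ edges of G` has cyclic matching number at least `d`
if every `d` cyclically consecutive edges in the ordering are pairwise disjoint. -/
def CyclicGood {V : Type*} (G : SimpleGraph V) {N : ℕ}
    (f : ZMod N ≃ G.edgeSet) (d : ℕ) : Prop :=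
  ∀ (i : ZMod N) (j k : ℕ), j < d → k < d → j ≠ k →
    edgesDisjoint (f (i + (j : ZMod N)) : Sym2 V) (f (i + (k : ZMod N)) : Sym2 V)

/-- The cyclic matching sequencibility `cms G`: the largest `d` for which some
cyclic ordering of the edges of `G` has every `d` cyclically consecutive edges
forming a matching. -/
noncomputable def cms {V : Type*} (G : SimpleGraph V) : ℕ :=
  sSup {d : ℕ | ∃ f : ZMod (edgeCount G) ≃ G.edgeSet, CyclicGood G f d}

/-- Suppose `m ≥ 2` and `f` is a cyclic ordering of the `2m² + m`
edges of `K_{2m+1}` in which every `m` cyclically consecutive edges are pairwise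
disjoint.  Then for each index `i`, the `m` edges `f(i), f(i+1), …, f(i+m-1)` are
distinct (so together with disjointness they form a near-perfect matching) leaving
exactly one vertex `v` uncovered, and the edge `f(i+m)` joins `v` to one of the two
vertices of the edge `f(i)`. -/
lemma edge_rep {n : ℕ} (e : (⊤ : SimpleGraph (Fin n)).edgeSet) :
    ∃ a b : Fin n, a ≠ b ∧ (e : Sym2 (Fin n)) = s(a,b) := by
  obtain ⟨e, he⟩ := e
  induction e using Sym2.ind with
  | _ a b => exact ⟨a, b, by simpa using he, rfl⟩

theorem near_perfect_matching_structure (m : ℕ) (hm : 2 ≤ m)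
    (f : ZMod (2 * m ^ 2 + m) ≃ (⊤ : SimpleGraph (Fin (2 * m + 1))).edgeSet)
    (hf : CyclicGood (⊤ : SimpleGraph (Fin (2 * m + 1))) f m) :
    ∀ i : ZMod (2 * m ^ 2 + m),
      (∀ j k : ℕ, j < m → k < m → j ≠ k →
        (f (i + (j : ZMod (2 * m ^ 2 + m))) : Sym2 (Fin (2 * m + 1))) ≠
          (f (i + (k : ZMod (2 * m ^ 2 + m))) : Sym2 (Fin (2 * m + 1)))) ∧
      (∃! v : Fin (2 * m + 1), ∀ j : ℕ, j < m →
        v ∉ (f (i + (j : ZMod (2 * m ^ 2 + m))) : Sym2 (Fin (2 * m + 1)))) ∧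
      (∀ v : Fin (2 * m + 1),
        (∀ j : ℕ, j < m → v ∉ (f (i + (j : ZMod (2 * m ^ 2 + m))) : Sym2 (Fin (2 * m + 1)))) →
        ∃ u : Fin (2 * m + 1),
          (f (i + (m : ZMod (2 * m ^ 2 + m))) : Sym2 (Fin (2 * m + 1))) = s(v, u) ∧
          u ∈ (f i : Sym2 (Fin (2 * m + 1)))) := by
  intro i
  have hNpos : 0 < 2 * m ^ 2 + m := by nlinarith
  have hmN : m < 2 * m ^ 2 + m := by nlinarith
  haveI : NeZero (2 * m ^ 2 + m) := ⟨hNpos.ne'⟩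
  have part1 : ∀ j k : ℕ, j < m → k < m → j ≠ k →
      (f (i + (j : ZMod (2 * m ^ 2 + m))) : Sym2 (Fin (2 * m + 1))) ≠
        (f (i + (k : ZMod (2 * m ^ 2 + m))) : Sym2 (Fin (2 * m + 1))) := by
    intro j k hj hk hjk heq
    obtain ⟨a, b, hab, he⟩ := edge_rep (f (i + (j : ZMod (2 * m ^ 2 + m))))
    exact hf i j k hj hk hjk a (by rw [he]; exact Sym2.mem_mk_left a b)
      (by rw [← heq, he]; exact Sym2.mem_mk_left a b)
  set T : ℕ → Finset (Fin (2 * m + 1)) :=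
    fun j => Finset.univ.filter (fun v => v ∈ (f (i + (j : ZMod (2 * m ^ 2 + m))) : Sym2 (Fin (2 * m + 1))))
    with hT
  set B : Finset (Fin (2 * m + 1)) := (Finset.range m).biUnion T with hB
  have hTcard : ∀ j, (T j).card = 2 := by
    intro j
    obtain ⟨a, b, hab, he⟩ := edge_rep (f (i + (j : ZMod (2 * m ^ 2 + m))))
    have : T j = {a, b} := by
      ext v; simp [hT, he, Sym2.mem_iff]
    rw [this, Finset.card_pair hab]
  have hBcard : B.card = 2 * m := by
    rw [hB, Finset.card_biUnion]
    · simp [hTcard, Finset.sum_const]; ring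
    · intro j hj k hk hjk
      rw [Function.onFun, Finset.disjoint_left]
      intro v hv hv'
      simp only [hT, Finset.mem_filter] at hv hv'
      exact hf i j k (Finset.mem_range.mp hj) (Finset.mem_range.mp hk) hjk v hv.2 hv'.2
  have hcompl : Bᶜ.card = 1 := by
    rw [Finset.card_compl, hBcard]
    simp
  obtain ⟨v₀, hv₀⟩ := Finset.card_eq_one.mp hcompl
  have hmem : ∀ v : Fin (2 * m + 1), v ∈ B ↔
      ∃ j, j < m ∧ v ∈ (f (i + (j : ZMod (2 * m ^ 2 + m))) : Sym2 (Fin (2 * m + 1))) := by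
    intro v
    simp [hB, hT]
  have hPB : ∀ v : Fin (2 * m + 1),
      (∀ j : ℕ, j < m → v ∉ (f (i + (j : ZMod (2 * m ^ 2 + m))) : Sym2 (Fin (2 * m + 1)))) ↔ v = v₀ := by
    intro v
    rw [show (v = v₀) ↔ v ∉ B by rw [← Finset.mem_compl, hv₀]; simp]
    rw [hmem]
    push_neg
    tauto
  refine ⟨part1, ⟨v₀, (hPB v₀).mpr rfl, fun v hv => (hPB v).mp hv⟩, ?_⟩
  intro v hv
  have hvv₀ : v = v₀ := (hPB v).mp hv
  subst hvv₀
  have hshift : ∀ j : ℕ, 1 ≤ j → j < m →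
      edgesDisjoint (f (i + (j : ZMod (2 * m ^ 2 + m))) : Sym2 (Fin (2 * m + 1)))
        (f (i + (m : ZMod (2 * m ^ 2 + m))) : Sym2 (Fin (2 * m + 1))) := by
    intro j hj1 hjm
    obtain ⟨j', rfl⟩ : ∃ j', j = j' + 1 := ⟨j - 1, by omega⟩
    obtain ⟨m', hm'⟩ : ∃ m', m = m' + 1 := ⟨m - 1, by omega⟩
    have h1 : i + ((j' + 1 : ℕ) : ZMod (2 * m ^ 2 + m)) = (i + 1) + (j' : ZMod (2 * m ^ 2 + m)) := by push_cast; ring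
    have hcast : ((m : ℕ) : ZMod (2 * m ^ 2 + m)) = ((m' + 1 : ℕ) : ZMod (2 * m ^ 2 + m)) :=
      congrArg _ hm'
    have h2 : i + (m : ZMod (2 * m ^ 2 + m)) = (i + 1) + (m' : ZMod (2 * m ^ 2 + m)) := by
      rw [hcast]; push_cast; ring
    rw [h1, h2]
    exact hf (i + 1) j' m' (by omega) (by omega) (by omega)
  have hkey : ∀ x, x ∈ (f (i + (m : ZMod (2 * m ^ 2 + m))) : Sym2 (Fin (2 * m + 1))) →
      x = v ∨ x ∈ (f i : Sym2 (Fin (2 * m + 1))) := by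
    intro x hx
    by_cases hxv : x = v
    · exact Or.inl hxv
    · right
      have hxB : x ∈ B := by
        by_contra hxB
        refine hxv ((hPB x).mp ?_)
        intro j hj hvj
        exact hxB ((hmem x).mpr ⟨j, hj, hvj⟩)
      obtain ⟨j, hj, hxj⟩ := (hmem x).mp hxB
      rcases Nat.eq_zero_or_pos j with rfl | hj1
      · simpa using hxj
      · exact absurd hx (hshift j hj1 hj x hxj)
  obtain ⟨a, b, hab, hei⟩ := edge_rep (f i)
  obtain ⟨c, d, hcd, heim⟩ := edge_rep (f (i + (m : ZMod (2 * m ^ 2 + m))))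
  have hne : (f (i + (m : ZMod (2 * m ^ 2 + m))) : Sym2 (Fin (2 * m + 1))) ≠ (f i : Sym2 (Fin (2 * m + 1))) := by
    intro h
    have heq : i + (m : ZMod (2 * m ^ 2 + m)) = i := f.injective (Subtype.ext h)
    have hm0 : (m : ZMod (2 * m ^ 2 + m)) = 0 := by
      have := congrArg (fun x => x - i) heq
      simpa [add_comm] using this
    have hdvd : 2 * m ^ 2 + m ∣ m := (ZMod.natCast_eq_zero_iff m (2 * m ^ 2 + m)).mp hm0
    exact absurd (Nat.le_of_dvd (by omega) hdvd) (by omega)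
  have hc := hkey c (by rw [heim]; exact Sym2.mem_mk_left c d)
  have hd := hkey d (by rw [heim]; exact Sym2.mem_mk_right c d)
  by_cases hvc : c = v
  · subst hvc
    rcases hd with rfl | hd
    · exact absurd rfl hcd
    · exact ⟨d, heim, hd⟩
  · by_cases hvd : d = v
    · subst hvd
      rcases hc with rfl | hc
      · exact absurd rfl hcd
      · exact ⟨c, by rw [heim, Sym2.eq_swap], hc⟩
    · exfalso
      apply hne
      rcases hc with rfl | hc
      · exact absurd rfl hvc
      rcases hd with rfl | hd
      · exact absurd rfl hvd
      rw [hei, Sym2.mem_iff] at hc hd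
      rw [heim, hei]
      rcases hc with rfl | rfl <;> rcases hd with rfl | rfl
      · exact absurd rfl hcd
      · rfl
      · exact Sym2.eq_swap
      · exact absurd rfl hcd
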